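/- Let A ∈ ℂ^{m×n} and b ∈ ℂ^m with b in the range of A. Then the minimum over x ∈ ℂ^n with A x = b of ‖x‖₁ equals the supremum over y ∈ ℂ^m with ‖A*y‖_∞ ≤ 1 of Re(b*y), and the minimum is attained. -/

import Mathlib

open Filter Topology Matrix Finset

noncomputable def l1 {ι : Type*} [Fintype ι] (v : ι → ℂ) : ℝ := ∑ i, ‖v i‖

noncomputable def l2sq {ι : Type*} [Fintype ι] (v : ι → ℂ) : ℝ := ∑ i, (‖v i‖)^2

noncomputable def l2 {ι : Type*} [Fintype ι] (v : ι → ℂ) : ℝ := Real.sqrt (l2sq v)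

noncomputable def linf {ι : Type*} [Fintype ι] (v : ι → ℂ) : ℝ := ⨆ i, ‖v i‖

noncomputable def csign (w : ℂ) : ℂ := if w = 0 then 0 else w / (‖w‖ : ℂ)

noncomputable def shrink {ι : Type*} [Fintype ι] (z : ι → ℂ) (ν : ℝ) : ι → ℂ :=
  fun i => ((max (‖z i‖ - ν) 0 : ℝ) : ℂ) * csign (z i)

noncomputable def reInner {ι : Type*} [Fintype ι] (y v : ι → ℂ) : ℝ :=
  (∑ i, (starRingEnd ℂ) (y i) * v i).re

noncomputable def projBall {ι : Type*} [Fintype ι] (t : ℝ) (v : ι → ℂ) : ι → ℂ :=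
  if l2 v ≤ t then v else (t / l2 v) • v

noncomputable def projBox {ι : Type*} [Fintype ι] (v : ι → ℂ) : ι → ℂ :=
  fun i => if ‖v i‖ ≤ 1 then v i else v i / (‖v i‖ : ℂ)

noncomputable def lmax {m n : ℕ} (A : Matrix (Fin m) (Fin n) ℂ) : ℝ :=
  ⨆ i, (Matrix.isHermitian_conjTranspose_mul_self A).eigenvalues i

lemma l1_nonneg {ι : Type*} [Fintype ι] (v : ι → ℂ) : 0 ≤ l1 v :=
  Finset.sum_nonneg fun i _ => norm_nonneg _

lemma abs_le_l1 {ι : Type*} [Fintype ι] (v : ι → ℂ) (i : ι) : ‖v i‖ ≤ l1 v :=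
  Finset.single_le_sum (fun j _ => norm_nonneg _) (Finset.mem_univ i)

lemma l1_continuous {ι : Type*} [Fintype ι] : Continuous (l1 (ι := ι)) :=
  continuous_finset_sum _ fun i _ => continuous_norm.comp (continuous_apply i)

lemma norm_le_l1 {ι : Type*} [Fintype ι] (v : ι → ℂ) : ‖v‖ ≤ l1 v := by
  rw [pi_norm_le_iff_of_nonneg (l1_nonneg v)]
  exact fun i => abs_le_l1 v i

lemma abs_le_linf {ι : Type*} [Fintype ι] (v : ι → ℂ) (i : ι) : ‖v i‖ ≤ linf v := by
  exact le_ciSup (Set.Finite.bddAbove (Set.finite_range (fun j => ‖v j‖))) i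

lemma linf_nonneg {ι : Type*} [Fintype ι] (v : ι → ℂ) : 0 ≤ linf v :=
  Real.iSup_nonneg fun i => norm_nonneg _

lemma reInner_adjoint {m n : ℕ} (A : Matrix (Fin m) (Fin n) ℂ) (x : Fin n → ℂ) (y : Fin m → ℂ) :
    reInner (A.mulVec x) y = reInner x (Aᴴ.mulVec y) := by
  unfold reInner
  congr 1
  simp only [Matrix.mulVec, dotProduct, Matrix.conjTranspose_apply, map_sum, _root_.map_mul,
    Finset.mul_sum, Finset.sum_mul]
  rw [Finset.sum_comm]
  apply Finset.sum_congr rfl; intro i _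
  apply Finset.sum_congr rfl; intro j _
  simp [Matrix.conjTranspose_apply]
  ring

lemma csign_conj_mul (w : ℂ) : (starRingEnd ℂ) (csign w) * w = (‖w‖ : ℂ) := by
  unfold csign
  by_cases h : w = 0
  · simp [h]
  · have h2 : (‖w‖ : ℂ) ≠ 0 := by
      exact_mod_cast Complex.ofReal_ne_zero.mpr (norm_ne_zero_iff.mpr h)
    simp only [h, if_false, map_div₀]
    rw [div_mul_eq_mul_div, mul_comm, Complex.mul_conj, Complex.conj_ofReal]
    rw [← Complex.sq_norm]
    push_cast
    field_simp

lemma abs_csign_le (w : ℂ) : ‖csign w‖ ≤ 1 := by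
  unfold csign
  by_cases h : w = 0
  · simp [h]
  · simp only [h, if_false, norm_div, Complex.norm_real, norm_norm,
      div_self (norm_ne_zero_iff.mpr h), le_refl]

lemma weak_ineq {ι : Type*} [Fintype ι] (x w : ι → ℂ) (hw : linf w ≤ 1) :
    reInner x w ≤ l1 x := by
  unfold reInner
  rw [Complex.re_sum]
  calc ∑ i, ((starRingEnd ℂ) (x i) * w i).re
      ≤ ∑ i, ‖(starRingEnd ℂ) (x i) * w i‖ :=
        Finset.sum_le_sum fun i _ => Complex.re_le_norm _
    _ = ∑ i, ‖x i‖ * ‖w i‖ := by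
        simp [_root_.map_mul]
    _ ≤ ∑ i, ‖x i‖ * 1 := by
        apply Finset.sum_le_sum
        intro i _
        exact mul_le_mul_of_nonneg_left ((abs_le_linf w i).trans hw) (norm_nonneg _)
    _ = l1 x := by simp [l1]

lemma l1_convex {ι : Type*} [Fintype ι] {c : ℝ} : Convex ℝ {x : ι → ℂ | l1 x ≤ c} := by
  intro x hx z hz a bb ha hbb hab
  simp only [Set.mem_setOf_eq] at *
  calc l1 (a • x + bb • z) = ∑ i, ‖a • x i + bb • z i‖ := by
        simp [l1]
    _ ≤ ∑ i, (a * ‖x i‖ + bb * ‖z i‖) := by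
        apply Finset.sum_le_sum
        intro i _
        refine (norm_add_le _ _).trans ?_
        have h1 : ‖a • x i‖ = a * ‖x i‖ := by
          rw [norm_smul, Real.norm_eq_abs, abs_of_nonneg ha]
        have h2 : ‖bb • z i‖ = bb * ‖z i‖ := by
          rw [norm_smul, Real.norm_eq_abs, abs_of_nonneg hbb]
        rw [h1, h2]
    _ ≤ c := by
        rw [Finset.sum_add_distrib, ← Finset.mul_sum, ← Finset.mul_sum]
        calc a * l1 x + bb * l1 z ≤ a * c + bb * c := by
              apply add_le_add
              · exact mul_le_mul_of_nonneg_left hx ha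
              · exact mul_le_mul_of_nonneg_left hz hbb
          _ = c := by rw [← add_mul, hab, one_mul]

lemma exists_min {m n : ℕ} (A : Matrix (Fin m) (Fin n) ℂ) (b : Fin m → ℂ)
    (x0 : Fin n → ℂ) (hx0 : A.mulVec x0 = b) :
    ∃ xt : Fin n → ℂ, A.mulVec xt = b ∧ ∀ x : Fin n → ℂ, A.mulVec x = b → l1 xt ≤ l1 x := by
  set K : Set (Fin n → ℂ) := {x | A.mulVec x = b ∧ l1 x ≤ l1 x0} with hK
  have hcontA : Continuous fun x : Fin n → ℂ => A.mulVec x :=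
    LinearMap.continuous_of_finiteDimensional (Matrix.mulVecLin A)
  have hKc : IsClosed K := by
    apply IsClosed.inter
    · exact isClosed_eq hcontA continuous_const
    · exact isClosed_le l1_continuous continuous_const
  have hKb : Bornology.IsBounded K := by
    apply Bornology.IsBounded.subset (Metric.isBounded_closedBall (x := (0 : Fin n → ℂ)) (r := l1 x0))
    intro x hx
    simp only [Metric.mem_closedBall, dist_zero_right]
    exact (norm_le_l1 x).trans hx.2
  have hKcp : IsCompact K := Metric.isCompact_of_isClosed_isBounded hKc hKb
  have hKne : K.Nonempty := ⟨x0, hx0, le_refl _⟩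
  obtain ⟨xt, hxtK, hmin⟩ := hKcp.exists_isMinOn hKne l1_continuous.continuousOn
  refine ⟨xt, hxtK.1, fun x hx => ?_⟩
  by_cases h : l1 x ≤ l1 x0
  · exact hmin ⟨hx, h⟩
  · exact (hmin ⟨hx0, le_refl _⟩).trans (le_of_not_ge h)

lemma l1_single {ι : Type*} [Fintype ι] [DecidableEq ι] (i : ι) (v : ℂ) :
    l1 (Pi.single i v) = ‖v‖ := by
  unfold l1
  rw [Finset.sum_eq_single i]
  · simp
  · intro j _ hj; simp [Pi.single_apply, hj]
  · intro h; exact absurd (Finset.mem_univ i) h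

lemma reInner_single {ι : Type*} [Fintype ι] [DecidableEq ι] (i : ι) (v : ℂ) (w : ι → ℂ) :
    reInner (Pi.single i v) w = ((starRingEnd ℂ) v * w i).re := by
  unfold reInner
  congr 1
  rw [Finset.sum_eq_single i]
  · simp
  · intro j _ hj; simp [Pi.single_apply, hj]
  · intro h; exact absurd (Finset.mem_univ i) h

lemma reInner_smul_right {ι : Type*} [Fintype ι] (b y : ι → ℂ) (r : ℝ) :
    reInner b (((r : ℂ)) • y) = r * reInner b y := by
  unfold reInner
  rw [Complex.re_sum, Complex.re_sum, Finset.mul_sum]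
  apply Finset.sum_congr rfl
  intro i _
  simp only [Pi.smul_apply, smul_eq_mul]
  rw [show (starRingEnd ℂ) (b i) * ((r:ℂ) * y i) = (r:ℂ) * ((starRingEnd ℂ) (b i) * y i) by ring,
    Complex.re_ofReal_mul]

lemma rep_lemma {m : ℕ} (f : (Fin m → ℂ) →L[ℝ] ℝ) (v : Fin m → ℂ) :
    reInner v (fun i => (f (Pi.single i 1) : ℂ) + Complex.I * (f (Pi.single i Complex.I) : ℂ))
      = f v := by
  have hv : v = ∑ i, ((v i).re • (Pi.single i (1:ℂ) : Fin m → ℂ) + (v i).im • (Pi.single i Complex.I : Fin m → ℂ)) := by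
    funext j
    simp only [Finset.sum_apply, Pi.add_apply, Pi.smul_apply, Pi.single_apply]
    rw [Finset.sum_eq_single j]
    · simp [Complex.ext_iff]
    · intro k _ hk; simp [Ne.symm hk]
    · intro h; exact absurd (Finset.mem_univ j) h
  conv_rhs => rw [hv]
  rw [map_sum]
  unfold reInner
  rw [Complex.re_sum]
  apply Finset.sum_congr rfl
  intro i _
  rw [map_add, ContinuousLinearMap.map_smul, ContinuousLinearMap.map_smul]
  simp only [smul_eq_mul]
  set a := f (Pi.single i 1)
  set c := f (Pi.single i Complex.I)
  simp [Complex.ext_iff, mul_comm]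


/-- Strong duality between the basis pursuit problem and its dual (2.30);
the primal minimum is attained and equals the dual supremum. -/
theorem strong_duality_bp {m n : ℕ} (A : Matrix (Fin m) (Fin n) ℂ) (b : Fin m → ℂ)
    (hb : ∃ x0 : Fin n → ℂ, A.mulVec x0 = b) :
    ∃ xt : Fin n → ℂ,
      A.mulVec xt = b ∧
      (∀ x : Fin n → ℂ, A.mulVec x = b → l1 xt ≤ l1 x) ∧
      IsLUB {v : ℝ | ∃ y : Fin m → ℂ, linf (Aᴴ.mulVec y) ≤ 1 ∧ v = reInner b y}
        (l1 xt) := by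
  obtain ⟨x0, hx0⟩ := hb
  obtain ⟨xt, hxt, hmin⟩ := exists_min A b x0 hx0
  refine ⟨xt, hxt, hmin, ?_, ?_⟩
  · -- upper bound
    rintro v ⟨y, hy, rfl⟩
    rw [← hxt, reInner_adjoint]
    exact weak_ineq xt _ hy
  · -- least upper bound
    intro ub hub
    by_contra hlt
    push_neg at hlt
    have key : ∃ y : Fin m → ℂ, linf (Aᴴ.mulVec y) ≤ 1 ∧ ub < reInner b y := by
      by_cases hc : 0 ≤ ub
      · -- separation argument
        set B : Set (Fin n → ℂ) := {x | l1 x ≤ ub} with hB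
        have hBcl : IsClosed B := isClosed_le l1_continuous continuous_const
        have hBbd : Bornology.IsBounded B := by
          apply Bornology.IsBounded.subset
            (Metric.isBounded_closedBall (x := (0 : Fin n → ℂ)) (r := ub))
          intro x hx
          simp only [Metric.mem_closedBall, dist_zero_right]
          exact (norm_le_l1 x).trans hx
        have hBcp : IsCompact B := Metric.isCompact_of_isClosed_isBounded hBcl hBbd
        have hcontA : Continuous fun x : Fin n → ℂ => A.mulVec x :=
          LinearMap.continuous_of_finiteDimensional (Matrix.mulVecLin A)
        set D : Set (Fin m → ℂ) := (fun x => A.mulVec x) '' B with hD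
        have hDcp : IsCompact D := hBcp.image hcontA
        have hDconv : Convex ℝ D := by
          have : D = ((Matrix.mulVecLin A).restrictScalars ℝ) '' B := by
            simp [hD, Matrix.mulVecLin_apply]
            rfl
          rw [this]
          exact Convex.linear_image l1_convex _
        have hbD : b ∉ D := by
          rintro ⟨x, hxB, hxe⟩
          have := hmin x hxe
          have : l1 xt ≤ ub := this.trans hxB
          linarith
        obtain ⟨f, u, hfu, hfb⟩ :=
          geometric_hahn_banach_closed_point hDconv hDcp.isClosed hbD
        set y : Fin m → ℂ :=
          fun i => (f (Pi.single i 1) : ℂ) + Complex.I * (f (Pi.single i Complex.I) : ℂ) with hy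
        have hrep : ∀ v, reInner v y = f v := rep_lemma f
        set w : Fin n → ℂ := Aᴴ.mulVec y with hw
        have hu0 : 0 < u := by
          have h0B : (0 : Fin n → ℂ) ∈ B := by
            simp only [hB, Set.mem_setOf_eq, l1]
            simpa using hc
          have := hfu (A.mulVec 0) ⟨0, h0B, rfl⟩
          simpa [Matrix.mulVec_zero] using this
        have hwi : ∀ i, ub * ‖w i‖ < u := by
          intro i
          set x : Fin n → ℂ := Pi.single i ((ub : ℂ) * csign (w i)) with hx
          have hxB : x ∈ B := by
            simp only [hB, Set.mem_setOf_eq, hx, l1_single, norm_mul, Complex.norm_real, Real.norm_eq_abs,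
              abs_of_nonneg hc]
            calc ub * ‖csign (w i)‖ ≤ ub * 1 :=
                  mul_le_mul_of_nonneg_left (abs_csign_le _) hc
              _ = ub := mul_one ub
          have hfx := hfu (A.mulVec x) ⟨x, hxB, rfl⟩
          have heq : f (A.mulVec x) = ub * ‖w i‖ := by
            rw [← hrep, reInner_adjoint, ← hw, hx, reInner_single]
            rw [_root_.map_mul, Complex.conj_ofReal, mul_assoc, csign_conj_mul]
            rw [← Complex.ofReal_mul]
            exact Complex.ofReal_re _
          rw [heq] at hfx
          exact hfx
        have hMu : ub * linf w ≤ u := by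
          rw [linf, Real.mul_iSup_of_nonneg hc]
          exact Real.iSup_le (fun i => le_of_lt (hwi i)) (le_of_lt hu0)
        have hM0 : 0 ≤ linf w := linf_nonneg w
        rcases eq_or_lt_of_le hM0 with hM | hM
        · -- linf w = 0, contradiction
          exfalso
          have hw0 : w = 0 := by
            funext i
            have h1 := abs_le_linf w i
            rw [← hM] at h1
            exact norm_eq_zero.mp (le_antisymm h1 (norm_nonneg _))
          have : reInner b y = 0 := by
            rw [← hx0, reInner_adjoint, ← hw, hw0]
            simp [reInner]
          rw [hrep] at this
          linarith
        · -- linf w > 0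
          set M := linf w with hMdef
          refine ⟨((M⁻¹ : ℝ) : ℂ) • y, ?_, ?_⟩
          · have hw' : Aᴴ.mulVec (((M⁻¹ : ℝ) : ℂ) • y) = ((M⁻¹ : ℝ) : ℂ) • w := by
              exact Matrix.mulVec_smul Aᴴ _ y
            rw [hw']
            apply Real.iSup_le _ zero_le_one
            intro i
            simp only [Pi.smul_apply, smul_eq_mul, norm_mul, Complex.norm_real, Real.norm_eq_abs,
              abs_of_nonneg (le_of_lt (inv_pos.mpr hM))]
            calc M⁻¹ * ‖w i‖ ≤ M⁻¹ * M :=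
                  mul_le_mul_of_nonneg_left (abs_le_linf w i) (le_of_lt (inv_pos.mpr hM))
              _ = 1 := inv_mul_cancel₀ (ne_of_gt hM)
          · rw [reInner_smul_right, hrep]
            have h1 : ub * M ≤ u := hMu
            have h2 : u < f b := hfb
            calc ub = M⁻¹ * (ub * M) := by field_simp
              _ ≤ M⁻¹ * u := mul_le_mul_of_nonneg_left h1 (le_of_lt (inv_pos.mpr hM))
              _ < M⁻¹ * f b := by
                  apply mul_lt_mul_of_pos_left h2 (inv_pos.mpr hM)
      · refine ⟨0, ?_, ?_⟩
        · rw [Matrix.mulVec_zero]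
          apply Real.iSup_le _ zero_le_one
          intro i
          simp
        · have : reInner b 0 = 0 := by simp [reInner]
          rw [this]
          linarith
    obtain ⟨y, h1, h2⟩ := key
    exact absurd (hub ⟨y, h1, rfl⟩) (not_le.mpr h2)
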